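/- arXiv:2409.17859 — 4 statements merged into one kernel-verified Lean document; each statement's English description precedes it below -/
import Mathlib

section
/- Let ϑ ∈ (0, 1/2], y ∈ ℝ, k ∈ ℕ, η ∈ (0, 1/4), and let a₁, …, a_k > 0 with the convention a₀ = a_{k+1} = 0. Let ρ(ζ) = 2/(2+ζ²). Then for every z ∈ C^{k+1}_ub(ℝ) whose derivatives up to order k+1 are square-integrable against ρ(ϑ(·+y)), the interpolation inequality Σ_{j=1}^{k} ((3/4)a_j - (η/2)a_{j-1} - (1/2)a_{j+1}(1/η + 1/2)) ∫_ℝ ρ(ϑ(ζ+y)) |∂_ζʲz(ζ)|² dζ ≤ (η/2)a_k ∫_ℝ ρ(ϑ(ζ+y)) |∂_ζ^{k+1}z(ζ)|² dζ + (1/2)a₁(1/η + 1/2) ∫_ℝ ρ(ϑ(ζ+y)) |z(ζ)|² dζ holds. -/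
open MeasureTheory Filter Set

/-- Young-type pointwise inequality. -/
lemma young_pt (η wv A B : ℝ) (hη : 0 < η) (hw : 0 ≤ wv) :
    wv * |A| * |B| ≤ (η/2) * (wv * A^2) + (1/(2*η)) * (wv * B^2) := by
  have h2 : 2 * η * (|A| * |B|) ≤ η^2 * A^2 + B^2 := by
    nlinarith [sq_nonneg (η * |A| - |B|), sq_abs A, sq_abs B]
  have key : |A| * |B| ≤ (η/2)*A^2 + (1/(2*η))*B^2 := by
    rw [show (η/2)*A^2 + (1/(2*η))*B^2 = (η^2*A^2 + B^2)/(2*η) by field_simp,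
      le_div_iff₀ (by positivity)]
    nlinarith [h2]
  calc wv * |A| * |B| = wv * (|A| * |B|) := by ring
    _ ≤ wv * ((η/2)*A^2 + (1/(2*η))*B^2) := mul_le_mul_of_nonneg_left key hw
    _ = (η/2) * (wv * A^2) + (1/(2*η)) * (wv * B^2) := by ring

private lemma final_arith (η A Bf Ch T1 T2 : ℝ)
    (hb1 : -T1 ≤ 1/4*A + 1/4*Bf)
    (hb2 : -T2 ≤ η/2*Ch + 1/(2*η)*Bf)
    (key : A = -T1 - T2) :
    3/4*A ≤ η/2*Ch + (1/(2*η) + 1/4)*Bf := by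
  have expand : (1/(2*η) + 1/4) * Bf = 1/(2*η)*Bf + 1/4*Bf := by ring
  rw [expand]
  linarith

/-- The key integration-by-parts interpolation inequality for one level. -/
lemma aux_ibp (ϑ y : ℝ) (hϑ0 : 0 < ϑ) (hϑ2 : ϑ ≤ 1/2) (η : ℝ) (hη : 0 < η)
    (f g h : ℝ → ℝ)
    (hfd : ∀ ζ, HasDerivAt f (g ζ) ζ)
    (hgd : ∀ ζ, HasDerivAt g (h ζ) ζ)
    (hhc : Continuous h)
    (Mf : ℝ) (hMf : ∀ ζ, |f ζ| ≤ Mf) (Mg : ℝ) (hMg : ∀ ζ, |g ζ| ≤ Mg)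
    (hif : Integrable (fun ζ : ℝ => 2/(2+(ϑ*(ζ+y))^2) * (f ζ)^2))
    (hig : Integrable (fun ζ : ℝ => 2/(2+(ϑ*(ζ+y))^2) * (g ζ)^2))
    (hih : Integrable (fun ζ : ℝ => 2/(2+(ϑ*(ζ+y))^2) * (h ζ)^2)) :
    (3/4) * (∫ ζ : ℝ, 2/(2+(ϑ*(ζ+y))^2) * (g ζ)^2) ≤
      (η/2) * (∫ ζ : ℝ, 2/(2+(ϑ*(ζ+y))^2) * (h ζ)^2)
      + ((1/2)*(1/η+1/2)) * (∫ ζ : ℝ, 2/(2+(ϑ*(ζ+y))^2) * (f ζ)^2) := by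
  set w : ℝ → ℝ := fun ζ => 2/(2+(ϑ*(ζ+y))^2) with hw_def
  set w' : ℝ → ℝ := fun ζ => -(2*(2*(ϑ*(ζ+y))*ϑ)) / (2+(ϑ*(ζ+y))^2)^2 with hw'_def
  have hden : ∀ ζ : ℝ, (0:ℝ) < 2+(ϑ*(ζ+y))^2 := fun ζ => by positivity
  have hw_pos : ∀ ζ, 0 < w ζ := fun ζ => by
    simp only [hw_def]; positivity
  have hw_deriv : ∀ ζ, HasDerivAt w (w' ζ) ζ := by
    intro ζ
    have h1 : HasDerivAt (fun ζ : ℝ => 2+(ϑ*(ζ+y))^2) (2*(ϑ*(ζ+y))^1*ϑ) ζ := by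
      have hu : HasDerivAt (fun ζ : ℝ => ϑ*(ζ+y)) (ϑ*1) ζ :=
        ((hasDerivAt_id ζ).add_const y).const_mul ϑ
      simpa using (hu.pow 2).const_add 2
    have := (hasDerivAt_const ζ (2:ℝ)).div h1 (hden ζ).ne'
    convert (show HasDerivAt w _ ζ from this) using 1
    simp only [hw'_def]
    ring
  have hw'_bound : ∀ ζ, |w' ζ| ≤ (1/2) * w ζ := by
    intro ζ
    set u := ϑ*(ζ+y) with hu
    have hd := hden ζ
    have habs : |(-(2*(2*u*ϑ)))| = 4*ϑ*|u| := by
      simp only [abs_neg, abs_mul, abs_two, abs_of_pos hϑ0]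
      ring
    have h1 : |(-(2*(2*u*ϑ)))| ≤ 2+u^2 := by
      rw [habs]
      nlinarith [sq_nonneg (|u| - 1), sq_abs u, abs_nonneg u,
        mul_nonneg (by linarith : (0:ℝ) ≤ 1 - 2*ϑ) (abs_nonneg u)]
    have : |w' ζ| = |(-(2*(2*u*ϑ)))| / (2+u^2)^2 := by
      simp only [hw'_def, abs_div, abs_of_pos (pow_pos hd 2)]
      rw [hu]
    rw [this]
    calc |(-(2*(2*u*ϑ)))| / (2+u^2)^2 ≤ (2+u^2) / (2+u^2)^2 := by gcongr
      _ = (1/2) * w ζ := by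
          simp only [hw_def, ← hu]
          field_simp
  have hcf : Continuous f := by
    rw [continuous_iff_continuousAt]; exact fun ζ => (hfd ζ).continuousAt
  have hcg : Continuous g := by
    rw [continuous_iff_continuousAt]; exact fun ζ => (hgd ζ).continuousAt
  have hcw : Continuous w := by
    apply continuous_const.div (by fun_prop) (fun ζ => (hden ζ).ne')
  have hcw' : Continuous w' := by
    apply Continuous.div (by fun_prop) (by fun_prop) (fun ζ => (pow_pos (hden ζ) 2).ne')
  -- the three pieces of the derivative of F = w g f
  set t1 : ℝ → ℝ := fun ζ => w' ζ * g ζ * f ζ with ht1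
  set t2 : ℝ → ℝ := fun ζ => w ζ * h ζ * f ζ with ht2
  set F : ℝ → ℝ := fun ζ => w ζ * g ζ * f ζ with hF
  show (3/4) * (∫ ζ : ℝ, w ζ * (g ζ)^2) ≤
    (η/2) * (∫ ζ : ℝ, w ζ * (h ζ)^2) + ((1/2)*(1/η+1/2)) * (∫ ζ : ℝ, w ζ * (f ζ)^2)
  have hFd : ∀ ζ, HasDerivAt F (t1 ζ + t2 ζ + w ζ * (g ζ)^2) ζ := by
    intro ζ
    have := ((hw_deriv ζ).mul (hgd ζ)).mul (hfd ζ)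
    convert (show HasDerivAt F _ ζ from this) using 1
    simp only [ht1, ht2, Pi.mul_apply]
    ring
  -- integrability of pieces
  have i1 : Integrable t1 := by
    apply Integrable.mono' ((hig.const_mul (1/4)).add (hif.const_mul (1/4)))
      ((hcw'.mul hcg).mul hcf).aestronglyMeasurable
    filter_upwards with ζ
    have hb := hw'_bound ζ
    have hwp := (hw_pos ζ).le
    show ‖w' ζ * g ζ * f ζ‖ ≤ 1/4 * (w ζ * (g ζ)^2) + 1/4 * (w ζ * (f ζ)^2)
    rw [Real.norm_eq_abs, abs_mul, abs_mul]
    calc |w' ζ| * |g ζ| * |f ζ| ≤ ((1/2) * w ζ) * |g ζ| * |f ζ| := by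
          gcongr <;> positivity
      _ ≤ 1/4 * (w ζ * (g ζ)^2) + 1/4 * (w ζ * (f ζ)^2) := by
          nlinarith [mul_nonneg hwp (sq_nonneg (|g ζ| - |f ζ|)), sq_abs (g ζ), sq_abs (f ζ)]
  have i2 : Integrable t2 := by
    apply Integrable.mono' ((hih.const_mul (η/2)).add (hif.const_mul (1/(2*η))))
      ((hcw.mul hhc).mul hcf).aestronglyMeasurable
    filter_upwards with ζ
    show ‖w ζ * h ζ * f ζ‖ ≤ η/2 * (w ζ * (h ζ)^2) + 1/(2*η) * (w ζ * (f ζ)^2)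
    rw [Real.norm_eq_abs, abs_mul, abs_mul, abs_of_pos (hw_pos ζ)]
    exact young_pt η (w ζ) (h ζ) (f ζ) hη (hw_pos ζ).le
  have i3 : Integrable (fun ζ => w ζ * (g ζ)^2) := hig
  have iF' : Integrable (fun ζ => t1 ζ + t2 ζ + w ζ * (g ζ)^2) := (i1.add i2).add i3
  -- limits of F at ±∞
  have hMf0 : 0 ≤ Mf := le_trans (abs_nonneg _) (hMf 0)
  have hMg0 : 0 ≤ Mg := le_trans (abs_nonneg _) (hMg 0)
  have hFbound : ∀ ζ, ‖F ζ‖ ≤ w ζ * (Mg * Mf) := by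
    intro ζ
    rw [Real.norm_eq_abs, hF, abs_mul, abs_mul, abs_of_pos (hw_pos ζ), mul_assoc]
    exact mul_le_mul_of_nonneg_left
      (mul_le_mul (hMg ζ) (hMf ζ) (abs_nonneg _) hMg0) (hw_pos ζ).le
  have hwtop : Tendsto w atTop (nhds 0) := by
    apply Tendsto.div_atTop (tendsto_const_nhds)
    apply tendsto_atTop_add_const_left
    exact (tendsto_pow_atTop (by norm_num : (2:ℕ) ≠ 0)).comp
      ((tendsto_atTop_add_const_right atTop y tendsto_id).const_mul_atTop hϑ0)
  have hwbot : Tendsto w atBot (nhds 0) := by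
    apply Tendsto.div_atTop (tendsto_const_nhds)
    apply tendsto_atTop_add_const_left
    have hu : Tendsto (fun ζ : ℝ => ϑ*(ζ+y)) atBot atBot :=
      (tendsto_atBot_add_const_right atBot y tendsto_id).const_mul_atBot hϑ0
    have hsq : Tendsto (fun s : ℝ => s^2) atBot atTop := by
      have h2 : Tendsto (fun s : ℝ => (-s)^2) atBot atTop :=
        (tendsto_pow_atTop (by norm_num : (2:ℕ) ≠ 0)).comp tendsto_neg_atBot_atTop
      exact h2.congr (fun s => by ring)
    exact hsq.comp hu
  have hFtop : Tendsto F atTop (nhds 0) := by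
    apply squeeze_zero_norm hFbound
    have := hwtop.mul_const (Mg*Mf)
    simpa using this
  have hFbot : Tendsto F atBot (nhds 0) := by
    apply squeeze_zero_norm hFbound
    have := hwbot.mul_const (Mg*Mf)
    simpa using this
  -- integral of the derivative vanishes
  have hIoi := integral_Ioi_of_hasDerivAt_of_tendsto' (a := 0)
    (fun x _ => hFd x) iF'.integrableOn hFtop
  have hIic := integral_Iic_of_hasDerivAt_of_tendsto' (a := 0)
    (fun x _ => hFd x) iF'.integrableOn hFbot
  have hzero : (∫ ζ : ℝ, (t1 ζ + t2 ζ + w ζ * (g ζ)^2)) = 0 := by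
    rw [← intervalIntegral.integral_Iic_add_Ioi iF'.integrableOn iF'.integrableOn, hIoi, hIic]
    ring
  have hsplit : (∫ ζ : ℝ, t1 ζ) + (∫ ζ : ℝ, t2 ζ) + (∫ ζ : ℝ, w ζ * (g ζ)^2) = 0 := by
    have i12 : Integrable (fun ζ => t1 ζ + t2 ζ) := i1.add i2
    rw [integral_add i12 i3, integral_add i1 i2] at hzero
    exact hzero
  -- bound -∫t1 and -∫t2
  have hb1 : -(∫ ζ : ℝ, t1 ζ) ≤ (1/4) * (∫ ζ : ℝ, w ζ * (g ζ)^2)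
      + (1/4) * (∫ ζ : ℝ, w ζ * (f ζ)^2) := by
    rw [← integral_neg]
    calc (∫ ζ : ℝ, -t1 ζ)
        ≤ ∫ ζ : ℝ, (1/4 * (w ζ * (g ζ)^2) + 1/4 * (w ζ * (f ζ)^2)) := by
          apply integral_mono i1.neg ((hig.const_mul (1/4)).add (hif.const_mul (1/4)))
          intro ζ
          have hb := hw'_bound ζ
          have hwp := (hw_pos ζ).le
          have : -t1 ζ ≤ |w' ζ| * |g ζ| * |f ζ| := by
            rw [ht1]
            calc -(w' ζ * g ζ * f ζ) ≤ |w' ζ * g ζ * f ζ| := neg_le_abs _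
              _ = |w' ζ| * |g ζ| * |f ζ| := by rw [abs_mul, abs_mul]
          refine this.trans ?_
          calc |w' ζ| * |g ζ| * |f ζ| ≤ ((1/2) * w ζ) * |g ζ| * |f ζ| := by
                gcongr <;> positivity
            _ ≤ 1/4 * (w ζ * (g ζ)^2) + 1/4 * (w ζ * (f ζ)^2) := by
                nlinarith [mul_nonneg hwp (sq_nonneg (|g ζ| - |f ζ|)), sq_abs (g ζ), sq_abs (f ζ)]
      _ = (1/4) * (∫ ζ : ℝ, w ζ * (g ζ)^2) + (1/4) * (∫ ζ : ℝ, w ζ * (f ζ)^2) := by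
          rw [integral_add (hig.const_mul (1/4)) (hif.const_mul (1/4)),
            integral_const_mul, integral_const_mul]
  have hb2 : -(∫ ζ : ℝ, t2 ζ) ≤ (η/2) * (∫ ζ : ℝ, w ζ * (h ζ)^2)
      + (1/(2*η)) * (∫ ζ : ℝ, w ζ * (f ζ)^2) := by
    rw [← integral_neg]
    calc (∫ ζ : ℝ, -t2 ζ)
        ≤ ∫ ζ : ℝ, ((η/2) * (w ζ * (h ζ)^2) + (1/(2*η)) * (w ζ * (f ζ)^2)) := by
          apply integral_mono i2.neg ((hih.const_mul (η/2)).add (hif.const_mul (1/(2*η))))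
          intro ζ
          have : -t2 ζ ≤ w ζ * |h ζ| * |f ζ| := by
            rw [ht2]
            calc -(w ζ * h ζ * f ζ) ≤ |w ζ * h ζ * f ζ| := neg_le_abs _
              _ = w ζ * |h ζ| * |f ζ| := by
                  rw [abs_mul, abs_mul, abs_of_pos (hw_pos ζ)]
          exact this.trans (young_pt η (w ζ) (h ζ) (f ζ) hη (hw_pos ζ).le)
      _ = (η/2) * (∫ ζ : ℝ, w ζ * (h ζ)^2) + (1/(2*η)) * (∫ ζ : ℝ, w ζ * (f ζ)^2) := by
          rw [integral_add (hih.const_mul (η/2)) (hif.const_mul (1/(2*η))),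
            integral_const_mul, integral_const_mul]
  have hc : (1/2)*(1/η+1/2) = 1/(2*η) + 1/4 := by field_simp; ring
  rw [hc]
  have key : (∫ ζ : ℝ, w ζ * (g ζ)^2) = -(∫ ζ : ℝ, t1 ζ) - (∫ ζ : ℝ, t2 ζ) := by linarith
  exact final_arith η _ _ _ _ _ hb1 hb2 key

private lemma sum_shift (f : ℕ → ℝ) (m n : ℕ) :
    ∑ j ∈ Finset.Icc (m+1) (n+1), f j = ∑ j ∈ Finset.Icc m n, f (j+1) := by
  rw [← Finset.map_add_right_Icc m n 1, Finset.sum_map]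
  simp [addRightEmbedding]

private lemma sum_drop_bot (f : ℕ → ℝ) (l m : ℕ) (h : l ≤ m) :
    ∑ j ∈ Finset.Icc l m, f j = f l + ∑ j ∈ Finset.Icc (l+1) m, f j := by
  rw [← Finset.sum_erase_add (Finset.Icc l m) f (Finset.mem_Icc.2 ⟨le_rfl, h⟩),
    Finset.Icc_erase_left, ← Finset.Icc_add_one_left_eq_Ioc]
  ring

private lemma sum_drop_zero (f : ℕ → ℝ) (m : ℕ) :
    ∑ j ∈ Finset.Icc 0 m, f j = f 0 + ∑ j ∈ Finset.Icc 1 m, f j :=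
  sum_drop_bot f 0 m (Nat.zero_le m)

/-- The purely algebraic summation rearrangement. -/
private lemma sum_rearrange (m : ℕ) (η c : ℝ) (a I : ℕ → ℝ)
    (ha0 : a 0 = 0) (hak1 : a (m+2) = 0)
    (hP : ∀ j, 1 ≤ j → j ≤ m+1 → (3/4) * I j ≤ (η/2) * I (j+1) + c * I (j-1))
    (hap : ∀ j, 1 ≤ j → j ≤ m+1 → 0 ≤ a j) :
    ∑ j ∈ Finset.Icc 1 (m+1), ((3/4) * a j - (η/2) * a (j-1) - c * a (j+1)) * I j
      ≤ (η/2) * a (m+1) * I (m+2) + c * a 1 * I 0 := by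
  -- abbreviations
  set S1 := ∑ j ∈ Finset.Icc 1 (m+1), a j * I j with hS1
  set SA := ∑ j ∈ Finset.Icc 1 (m+1), a j * I (j+1) with hSA
  set SB := ∑ j ∈ Finset.Icc 1 (m+1), a j * I (j-1) with hSB
  set SY := ∑ j ∈ Finset.Icc 1 (m+1), a (j-1) * I j with hSY
  set SZ := ∑ j ∈ Finset.Icc 1 (m+1), a (j+1) * I j with hSZ
  -- step 1: the per-level inequality summed
  have hstep : (3/4) * S1 ≤ (η/2) * SA + c * SB := by
    have h1 : ∀ j ∈ Finset.Icc 1 (m+1),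
        (3/4) * (a j * I j) ≤ (η/2) * (a j * I (j+1)) + c * (a j * I (j-1)) := by
      intro j hj
      rw [Finset.mem_Icc] at hj
      have hP' := hP j hj.1 hj.2
      have ha := hap j hj.1 hj.2
      have := mul_le_mul_of_nonneg_left hP' ha
      calc (3/4) * (a j * I j) = a j * ((3/4) * I j) := by ring
        _ ≤ a j * ((η/2) * I (j+1) + c * I (j-1)) := this
        _ = (η/2) * (a j * I (j+1)) + c * (a j * I (j-1)) := by ring
    calc (3/4) * S1 = ∑ j ∈ Finset.Icc 1 (m+1), (3/4) * (a j * I j) := by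
          rw [hS1, Finset.mul_sum]
      _ ≤ ∑ j ∈ Finset.Icc 1 (m+1), ((η/2) * (a j * I (j+1)) + c * (a j * I (j-1))) :=
          Finset.sum_le_sum h1
      _ = (η/2) * SA + c * SB := by
          rw [Finset.sum_add_distrib, hSA, hSB, Finset.mul_sum, Finset.mul_sum]
  -- step 2: index shifts
  have hA : SA = SY + a (m+1) * I (m+2) := by
    have e1 : SY = ∑ j ∈ Finset.Icc 0 m, a j * I (j+1) := by
      rw [hSY, sum_shift (fun j => a (j-1) * I j) 0 m]
      simp
    have e2 : SY = ∑ j ∈ Finset.Icc 1 m, a j * I (j+1) := by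
      rw [e1, sum_drop_zero (fun j => a j * I (j+1)) m, ha0]
      ring
    rw [hSA, Finset.sum_Icc_succ_top (by omega : 1 ≤ m+1), e2]
  have hB : SB = SZ + a 1 * I 0 := by
    have h0 : a (m+1+1) = 0 := by
      rw [show m+1+1 = m+2 from by omega]; exact hak1
    have hSZ' : SZ = ∑ j ∈ Finset.Icc 1 m, a (j+1) * I j := by
      rw [hSZ, Finset.sum_Icc_succ_top (by omega : 1 ≤ m+1), h0]
      ring
    have hSB' : SB = a 1 * I 0 + ∑ j ∈ Finset.Icc (1+1) (m+1), a j * I (j-1) := by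
      rw [hSB]
      exact sum_drop_bot (fun j => a j * I (j-1)) 1 (m+1) (by omega)
    have e1 : ∑ j ∈ Finset.Icc (1+1) (m+1), a j * I (j-1)
        = ∑ j ∈ Finset.Icc 1 m, a (j+1) * I j := by
      rw [sum_shift (fun j => a j * I (j-1)) 1 m]
      simp
    rw [hSB', e1, hSZ']
    ring
  -- step 3: rewrite the LHS
  have hL : ∑ j ∈ Finset.Icc 1 (m+1), ((3/4) * a j - (η/2) * a (j-1) - c * a (j+1)) * I j
      = (3/4) * S1 - (η/2) * SY - c * SZ := by
    calc ∑ j ∈ Finset.Icc 1 (m+1), ((3/4) * a j - (η/2) * a (j-1) - c * a (j+1)) * I j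
        = ∑ j ∈ Finset.Icc 1 (m+1),
            ((3/4) * (a j * I j) - (η/2) * (a (j-1) * I j) - c * (a (j+1) * I j)) :=
          Finset.sum_congr rfl (fun j _ => by ring)
      _ = (3/4) * S1 - (η/2) * SY - c * SZ := by
          rw [Finset.sum_sub_distrib, Finset.sum_sub_distrib, hS1, hSY, hSZ,
            Finset.mul_sum, Finset.mul_sum, Finset.mul_sum]
  rw [hL]
  calc (3/4) * S1 - (η/2) * SY - c * SZ
      ≤ ((η/2) * SA + c * SB) - (η/2) * SY - c * SZ := by linarith [hstep]
    _ = (η/2) * a (m+1) * I (m+2) + c * a 1 * I 0 := by rw [hA, hB]; ring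

/-- The weighted interpolation inequality obtained by integration by
parts and Young's inequality, for the window `ρ(ζ) = 2/(2+ζ²)`, dilation `ϑ ∈ (0,1/2]`,
translate `y`, coefficients `a₁,…,a_k > 0` (with `a₀ = a_{k+1} = 0`) and `η ∈ (0,1/4)`. -/
theorem weighted_interpolation_inequality
    (ϑ : ℝ) (hϑ : ϑ ∈ Set.Ioc (0:ℝ) (1/2)) (y : ℝ)
    (k : ℕ) (hk : 1 ≤ k)
    (η : ℝ) (hη : η ∈ Set.Ioo (0:ℝ) (1/4))
    (a : ℕ → ℝ) (ha0 : a 0 = 0) (hak1 : a (k+1) = 0)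
    (hapos : ∀ j : ℕ, 1 ≤ j → j ≤ k → 0 < a j)
    (ρ : ℝ → ℝ) (hρ : ∀ ζ : ℝ, ρ ζ = 2 / (2 + ζ^2))
    (z : ℝ → ℝ) (hz : ContDiff ℝ (↑(k+1)) z)
    (hzb : ∀ j ≤ k+1, ∃ M : ℝ, ∀ ζ, |iteratedDeriv j z ζ| ≤ M)
    (hzu : ∀ j ≤ k+1, UniformContinuous (iteratedDeriv j z))
    (hzint : ∀ j ≤ k+1,
      Integrable (fun ζ => ρ (ϑ * (ζ + y)) * (iteratedDeriv j z ζ)^2)) :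
    ∑ j ∈ Finset.Icc 1 k,
        ((3/4) * a j - (η/2) * a (j-1) - (1/2) * a (j+1) * (1/η + 1/2)) *
          ∫ ζ : ℝ, ρ (ϑ * (ζ + y)) * (iteratedDeriv j z ζ)^2
      ≤ (η/2) * a k * (∫ ζ : ℝ, ρ (ϑ * (ζ + y)) * (iteratedDeriv (k+1) z ζ)^2)
        + (1/2) * a 1 * (1/η + 1/2) * ∫ ζ : ℝ, ρ (ϑ * (ζ + y)) * (z ζ)^2 := by
  obtain ⟨hϑ0, hϑ2⟩ := hϑ
  obtain ⟨hη0, -⟩ := hη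
  obtain ⟨m, rfl⟩ : ∃ m, k = m + 1 := ⟨k - 1, by omega⟩
  simp only [hρ] at hzint ⊢
  have hP : ∀ j, 1 ≤ j → j ≤ m+1 →
      (3/4) * (∫ ζ : ℝ, 2/(2+(ϑ*(ζ+y))^2) * (iteratedDeriv j z ζ)^2) ≤
        (η/2) * (∫ ζ : ℝ, 2/(2+(ϑ*(ζ+y))^2) * (iteratedDeriv (j+1) z ζ)^2)
        + ((1/2)*(1/η+1/2)) *
            (∫ ζ : ℝ, 2/(2+(ϑ*(ζ+y))^2) * (iteratedDeriv (j-1) z ζ)^2) := by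
    intro j hj1 hj2
    obtain ⟨i, rfl⟩ : ∃ i, j = i + 1 := ⟨j - 1, by omega⟩
    have hd1 : Differentiable ℝ (iteratedDeriv i z) :=
      hz.differentiable_iteratedDeriv i (by exact_mod_cast (by omega : i < m+1+1))
    have hd2 : Differentiable ℝ (iteratedDeriv (i+1) z) :=
      hz.differentiable_iteratedDeriv (i+1) (by exact_mod_cast (by omega : i+1 < m+1+1))
    have hfd : ∀ ζ, HasDerivAt (iteratedDeriv i z) (iteratedDeriv (i+1) z ζ) ζ := by
      intro ζ; rw [iteratedDeriv_succ]; exact (hd1 ζ).hasDerivAt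
    have hgd : ∀ ζ, HasDerivAt (iteratedDeriv (i+1) z) (iteratedDeriv (i+1+1) z ζ) ζ := by
      have e : iteratedDeriv (i+1+1) z = deriv (iteratedDeriv (i+1) z) := iteratedDeriv_succ
      intro ζ; rw [e]; exact (hd2 ζ).hasDerivAt
    have hhc : Continuous (iteratedDeriv (i+1+1) z) :=
      hz.continuous_iteratedDeriv (i+1+1) (by exact_mod_cast (by omega : i+1+1 ≤ m+1+1))
    obtain ⟨Mf, hMf⟩ := hzb i (by omega)
    obtain ⟨Mg, hMg⟩ := hzb (i+1) (by omega)
    have hif := hzint i (by omega)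
    have hig := hzint (i+1) (by omega)
    have hih := hzint (i+1+1) (by omega)
    have main := aux_ibp ϑ y hϑ0 hϑ2 η hη0 _ _ _ hfd hgd hhc Mf hMf Mg hMg hif hig hih
    simp only [Nat.add_sub_cancel]
    exact main
  have hap' : ∀ j, 1 ≤ j → j ≤ m+1 → 0 ≤ a j := fun j h1 h2 => (hapos j h1 h2).le
  have final := sum_rearrange m η ((1/2)*(1/η+1/2)) a
      (fun j => ∫ ζ : ℝ, 2/(2+(ϑ*(ζ+y))^2) * (iteratedDeriv j z ζ)^2)
      ha0 hak1 hP hap'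
  simp only [iteratedDeriv_zero] at final
  rw [show m+2 = m+1+1 from by omega] at final
  refine le_trans (le_of_eq (Finset.sum_congr rfl fun j hj => by ring))
    (final.trans (le_of_eq (by ring)))
end

section
/- Let ϑ > 0 and ρ(ζ) = 2/(2+ζ²), and let k ∈ {1,2}. There is a constant C > 0 such that for all z ∈ C^{k+1}_ub(ℝ): ‖z‖_{C^k_ub} ≤ C(‖z‖_{L^∞} + ‖z‖_{L^∞}^{1/5} sup_{y∈ℝ} ‖ρ(ϑ(·+y)) ∂_ζ^{k+1}z‖_{L²}^{4/5}). -/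
open MeasureTheory

private lemma key_bound (g g' g'' : ℝ → ℝ)
    (hg : ∀ t, HasDerivAt g (g' t) t) (hg' : ∀ t, HasDerivAt g' (g'' t) t)
    (hc'' : Continuous g'') (B : ℝ) (hB : ∀ t, |g t| ≤ B)
    {h : ℝ} (hh : 0 < h) (ζ : ℝ) :
    |g' ζ| ≤ 2 * B / h + ∫ t in ζ..ζ + h, |g'' t| := by
  have hcg' : Continuous g' := continuous_iff_continuousAt.2 fun t => (hg' t).continuousAt
  have hle : ζ ≤ ζ + h := by linarith
  have I1 : ∫ t in ζ..ζ + h, g' t = g (ζ + h) - g ζ :=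
    intervalIntegral.integral_eq_sub_of_hasDerivAt (fun t _ => hg t)
      (hcg'.intervalIntegrable _ _)
  have I2 : ∀ t, ∫ s in ζ..t, g'' s = g' t - g' ζ := fun t =>
    intervalIntegral.integral_eq_sub_of_hasDerivAt (fun s _ => hg' s)
      (hc''.intervalIntegrable _ _)
  set J := ∫ t in ζ..ζ + h, |g'' t| with hJ
  have key : h * g' ζ - (g (ζ + h) - g ζ) = ∫ t in ζ..ζ + h, (g' ζ - g' t) := by
    rw [intervalIntegral.integral_sub intervalIntegrable_const
      (hcg'.intervalIntegrable _ _), I1, intervalIntegral.integral_const]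
    simp [smul_eq_mul]
  have hb : ∀ t ∈ Set.Icc ζ (ζ + h), |g' ζ - g' t| ≤ J := by
    intro t ht
    have e : g' ζ - g' t = -(∫ s in ζ..t, g'' s) := by rw [I2]; ring
    rw [e, abs_neg]
    calc |∫ s in ζ..t, g'' s| ≤ ∫ s in ζ..t, |g'' s| :=
          intervalIntegral.abs_integral_le_integral_abs ht.1
      _ ≤ J := intervalIntegral.integral_mono_interval le_rfl ht.1 ht.2
          (ae_of_all _ fun s => abs_nonneg _) (hc''.abs.intervalIntegrable _ _)
  have main : |∫ t in ζ..ζ + h, (g' ζ - g' t)| ≤ h * J := by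
    calc |∫ t in ζ..ζ + h, (g' ζ - g' t)| ≤ ∫ t in ζ..ζ + h, |g' ζ - g' t| :=
          intervalIntegral.abs_integral_le_integral_abs hle
      _ ≤ ∫ _t in ζ..ζ + h, J := intervalIntegral.integral_mono_on hle
          ((continuous_const.sub hcg').abs.intervalIntegrable _ _)
          intervalIntegrable_const hb
      _ = h * J := by rw [intervalIntegral.integral_const]; simp [smul_eq_mul]
  have habs : h * |g' ζ| ≤ 2 * B + h * J := by
    have t1 : |h * g' ζ - (g (ζ + h) - g ζ)| ≤ h * J := by rw [key]; exact main
    have t2 : |g (ζ + h) - g ζ| ≤ 2 * B := by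
      calc |g (ζ + h) - g ζ| ≤ |g (ζ + h)| + |g ζ| := abs_sub _ _
        _ ≤ 2 * B := by linarith [hB (ζ + h), hB ζ]
    have t3 : |h * g' ζ| ≤ |h * g' ζ - (g (ζ + h) - g ζ)| + |g (ζ + h) - g ζ| := by
      calc |h * g' ζ| = |(h * g' ζ - (g (ζ + h) - g ζ)) + (g (ζ + h) - g ζ)| := by ring_nf
        _ ≤ _ := abs_add_le _ _
    calc h * |g' ζ| = |h * g' ζ| := by rw [abs_mul, abs_of_pos hh]
      _ ≤ 2 * B + h * J := by linarith
  have hfin : |g' ζ| ≤ (2 * B + h * J) / h := by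
    rw [le_div_iff₀ hh]; linarith [habs]
  calc |g' ζ| ≤ (2 * B + h * J) / h := hfin
    _ = 2 * B / h + J := by field_simp

private lemma abs_int_le (w : ℝ → ℝ) (hw : Continuous w) {h lam : ℝ} (hh : 0 < h)
    (hlam : 0 < lam) (ζ : ℝ) :
    ∫ t in ζ..ζ + h, |w t| ≤ lam * h / 2 + (1 / (2 * lam)) * ∫ t in ζ..ζ + h, (w t) ^ 2 := by
  have hle : ζ ≤ ζ + h := by linarith
  have pt : ∀ t ∈ Set.Icc ζ (ζ + h), |w t| ≤ lam / 2 + (w t) ^ 2 / (2 * lam) := by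
    intro t _
    have key : 2 * lam * |w t| ≤ lam ^ 2 + (w t) ^ 2 := by
      nlinarith [sq_nonneg (|w t| - lam), sq_abs (w t)]
    calc |w t| = (2 * lam * |w t|) / (2 * lam) := by field_simp
      _ ≤ (lam ^ 2 + (w t) ^ 2) / (2 * lam) := by gcongr
      _ = lam / 2 + (w t) ^ 2 / (2 * lam) := by field_simp
  calc ∫ t in ζ..ζ + h, |w t|
      ≤ ∫ t in ζ..ζ + h, (lam / 2 + (w t) ^ 2 / (2 * lam)) :=
        intervalIntegral.integral_mono_on hle (hw.abs.intervalIntegrable _ _)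
          ((continuous_const.add ((hw.pow 2).div_const _)).intervalIntegrable _ _) pt
    _ = lam * h / 2 + (1 / (2 * lam)) * ∫ t in ζ..ζ + h, (w t) ^ 2 := by
        rw [intervalIntegral.integral_add (f := fun _ => lam / 2)
          (g := fun t => (w t) ^ 2 / (2 * lam)) intervalIntegrable_const
          (((hw.pow 2).div_const _).intervalIntegrable _ _),
          intervalIntegral.integral_const, intervalIntegral.integral_div]
        simp [smul_eq_mul]
        ring

private lemma rho_integrable (ϑ : ℝ) (hϑ : 0 < ϑ) (ρ : ℝ → ℝ)
    (hρ : ∀ ζ : ℝ, ρ ζ = 2 / (2 + ζ ^ 2))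
    (w : ℝ → ℝ) (hw : Continuous w) (M : ℝ) (hM : ∀ t, |w t| ≤ M) (y : ℝ) :
    Integrable (fun t : ℝ => (ρ (ϑ * (t + y)) * w t) ^ 2) ∧
    (∀ t : ℝ, (ρ (ϑ * (t + y)) * w t) ^ 2 ≤ 2 * M ^ 2 * (1 + (ϑ * (t + y)) ^ 2)⁻¹) ∧
    Integrable (fun t : ℝ => 2 * M ^ 2 * (1 + (ϑ * (t + y)) ^ 2)⁻¹) := by
  have base : Integrable (fun x : ℝ => (1 + x ^ 2)⁻¹) := integrable_inv_one_add_sq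
  have c1 : Integrable (fun t : ℝ => (1 + (t + ϑ * y) ^ 2)⁻¹) := base.comp_add_right (ϑ * y)
  have c2 : Integrable (fun t : ℝ => (1 + (ϑ * t + ϑ * y) ^ 2)⁻¹) :=
    c1.comp_mul_left' (ne_of_gt hϑ)
  have b2 : Integrable (fun t : ℝ => (1 + (ϑ * (t + y)) ^ 2)⁻¹) := by
    simpa [mul_add] using c2
  have hbound : ∀ t : ℝ,
      (ρ (ϑ * (t + y)) * w t) ^ 2 ≤ 2 * M ^ 2 * (1 + (ϑ * (t + y)) ^ 2)⁻¹ := by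
    intro t
    set x := ϑ * (t + y) with hx
    have hd : (0:ℝ) < 2 + x ^ 2 := by positivity
    have h0 : 0 ≤ ρ x := by rw [hρ]; positivity
    have hρ1 : ρ x ≤ 1 := by rw [hρ, div_le_one hd]; nlinarith [sq_nonneg x]
    have h1 : ρ x ≤ 2 * (1 + x ^ 2)⁻¹ := by
      rw [hρ, inv_eq_one_div, mul_one_div, div_le_div_iff₀ hd (by positivity)]
      nlinarith [sq_nonneg x]
    have hw2 : (w t) ^ 2 ≤ M ^ 2 := by
      have := hM t
      nlinarith [abs_nonneg (w t), sq_abs (w t)]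
    calc (ρ x * w t) ^ 2 = ρ x ^ 2 * (w t) ^ 2 := by ring
      _ ≤ ρ x ^ 2 * M ^ 2 := mul_le_mul_of_nonneg_left hw2 (sq_nonneg _)
      _ ≤ ρ x * M ^ 2 := mul_le_mul_of_nonneg_right (by nlinarith) (sq_nonneg _)
      _ ≤ (2 * (1 + x ^ 2)⁻¹) * M ^ 2 := mul_le_mul_of_nonneg_right h1 (sq_nonneg _)
      _ = 2 * M ^ 2 * (1 + x ^ 2)⁻¹ := by ring
  have hcontρ : Continuous ρ := by
    have : ρ = fun ζ : ℝ => 2 / (2 + ζ ^ 2) := funext hρ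
    rw [this]; exact continuous_const.div (by continuity) (fun x => by positivity)
  have hcont : Continuous (fun t : ℝ => (ρ (ϑ * (t + y)) * w t) ^ 2) := by
    apply Continuous.pow
    exact (hcontρ.comp (continuous_const.mul (continuous_id.add continuous_const))).mul hw
  refine ⟨?_, hbound, b2.const_mul _⟩
  apply (b2.const_mul (2 * M ^ 2)).mono' hcont.aestronglyMeasurable
  refine ae_of_all _ fun t => ?_
  rw [Real.norm_eq_abs, abs_of_nonneg (sq_nonneg _)]
  exact hbound t

private lemma sq_int_le (ϑ : ℝ) (ρ : ℝ → ℝ)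
    (hρ : ∀ ζ : ℝ, ρ ζ = 2 / (2 + ζ ^ 2))
    (w : ℝ → ℝ) (hw : Continuous w)
    (hInt : ∀ y : ℝ, Integrable (fun t : ℝ => (ρ (ϑ * (t + y)) * w t) ^ 2))
    (S : ℝ) (hS : ∀ y : ℝ, ∫ t : ℝ, (ρ (ϑ * (t + y)) * w t) ^ 2 ≤ S ^ 2)
    {h : ℝ} (hh : 0 < h) (hh1 : h ≤ 1) (ζ : ℝ) :
    ∫ t in ζ..ζ + h, (w t) ^ 2 ≤ ((2 + ϑ ^ 2) / 2) ^ 2 * S ^ 2 := by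
  have hcontρ : Continuous ρ := by
    have : ρ = fun ζ : ℝ => 2 / (2 + ζ ^ 2) := funext hρ
    rw [this]; exact continuous_const.div (by continuity) (fun x => by positivity)
  set K : ℝ := (2 + ϑ ^ 2) / 2 with hK
  have hle : ζ ≤ ζ + h := by linarith
  have pt : ∀ t ∈ Set.Icc ζ (ζ + h), (w t) ^ 2 ≤ K ^ 2 * (ρ (ϑ * (t + -ζ)) * w t) ^ 2 := by
    intro t ht
    set x := ϑ * (t + -ζ) with hx
    have hx2 : x ^ 2 ≤ ϑ ^ 2 := by
      have h0 : 0 ≤ t - ζ := by linarith [ht.1]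
      have h1 : t - ζ ≤ 1 := by linarith [ht.2]
      have e : x = ϑ * (t - ζ) := by rw [hx]; ring
      rw [e]
      have : (t - ζ) ^ 2 ≤ 1 := by nlinarith
      nlinarith [sq_nonneg ϑ]
    have hd : (0:ℝ) < 2 + x ^ 2 := by positivity
    have hKρ : 1 ≤ K * ρ x := by
      rw [hρ, hK, div_mul_div_comm, le_div_iff₀ (by positivity)]
      nlinarith
    have h2 : 1 ≤ (K * ρ x) ^ 2 := by nlinarith
    calc (w t) ^ 2 = 1 * (w t) ^ 2 := (one_mul _).symm
      _ ≤ (K * ρ x) ^ 2 * (w t) ^ 2 := mul_le_mul_of_nonneg_right h2 (sq_nonneg _)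
      _ = K ^ 2 * (ρ x * w t) ^ 2 := by ring
  have hcont2 : Continuous (fun t : ℝ => K ^ 2 * (ρ (ϑ * (t + -ζ)) * w t) ^ 2) := by
    apply Continuous.mul continuous_const
    apply Continuous.pow
    exact (hcontρ.comp (continuous_const.mul (continuous_id.add continuous_const))).mul hw
  calc ∫ t in ζ..ζ + h, (w t) ^ 2
      ≤ ∫ t in ζ..ζ + h, K ^ 2 * (ρ (ϑ * (t + -ζ)) * w t) ^ 2 :=
        intervalIntegral.integral_mono_on hle ((hw.pow 2).intervalIntegrable _ _)
          (hcont2.intervalIntegrable _ _) pt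
    _ = K ^ 2 * ∫ t in ζ..ζ + h, (ρ (ϑ * (t + -ζ)) * w t) ^ 2 :=
        intervalIntegral.integral_const_mul _ _
    _ ≤ K ^ 2 * ∫ t : ℝ, (ρ (ϑ * (t + -ζ)) * w t) ^ 2 := by
        apply mul_le_mul_of_nonneg_left _ (sq_nonneg K)
        rw [intervalIntegral.integral_of_le hle]
        exact setIntegral_le_integral (hInt (-ζ)) (ae_of_all _ fun t => sq_nonneg _)
    _ ≤ K ^ 2 * S ^ 2 := mul_le_mul_of_nonneg_left (hS (-ζ)) (sq_nonneg K)

private lemma iteratedDeriv_zero_fun (j : ℕ) :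
    iteratedDeriv j (fun _ : ℝ => (0:ℝ)) = fun _ => 0 := by
  induction j with
  | zero => simp [iteratedDeriv_zero]
  | succ n ih => rw [iteratedDeriv_succ, ih]; simp

private lemma rpow_cancel (a : ℝ) (ha : 0 < a) (p q : ℝ) (hpq : p + q = 1) :
    a ^ p * a ^ q = a := by
  rw [← Real.rpow_add ha, hpq, Real.rpow_one]

private lemma e1 (a b : ℝ) (ha : 0 < a) (hb : 0 < b) :
    a / ((a / b) ^ ((2:ℝ)/3)) = a ^ ((1:ℝ)/3) * b ^ ((2:ℝ)/3) := by
  have hd : (a / b) ^ ((2:ℝ)/3) = a ^ ((2:ℝ)/3) / b ^ ((2:ℝ)/3) :=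
    Real.div_rpow ha.le hb.le _
  have ha' : (0:ℝ) < a ^ ((2:ℝ)/3) := Real.rpow_pos_of_pos ha _
  have hb' : (0:ℝ) < b ^ ((2:ℝ)/3) := Real.rpow_pos_of_pos hb _
  have hc : a ^ ((1:ℝ)/3) * a ^ ((2:ℝ)/3) = a := rpow_cancel a ha _ _ (by norm_num)
  rw [hd]
  field_simp
  linear_combination -hc

private lemma e2 (a b : ℝ) (ha : 0 < a) (hb : 0 < b) :
    b * Real.sqrt ((a / b) ^ ((2:ℝ)/3)) = a ^ ((1:ℝ)/3) * b ^ ((2:ℝ)/3) := by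
  have hd0 : (0:ℝ) ≤ a / b := by positivity
  have h1 : Real.sqrt ((a / b) ^ ((2:ℝ)/3)) = (a / b) ^ ((1:ℝ)/3) := by
    rw [Real.sqrt_eq_rpow, ← Real.rpow_mul hd0]; norm_num
  have hd : (a / b) ^ ((1:ℝ)/3) = a ^ ((1:ℝ)/3) / b ^ ((1:ℝ)/3) :=
    Real.div_rpow ha.le hb.le _
  have hb' : (0:ℝ) < b ^ ((1:ℝ)/3) := Real.rpow_pos_of_pos hb _
  have hc : b ^ ((1:ℝ)/3) * b ^ ((2:ℝ)/3) = b := rpow_cancel b hb _ _ (by norm_num)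
  rw [h1, hd]
  field_simp
  linear_combination -hc

private lemma e3 (a b : ℝ) (ha : 0 < a) (hb : 0 < b) :
    a / ((a / b) ^ ((2:ℝ)/5)) ^ 2 = a ^ ((1:ℝ)/5) * b ^ ((4:ℝ)/5) := by
  have hd0 : (0:ℝ) ≤ a / b := by positivity
  have h1 : ((a / b) ^ ((2:ℝ)/5)) ^ 2 = (a / b) ^ ((4:ℝ)/5) := by
    rw [← Real.rpow_natCast ((a / b) ^ ((2:ℝ)/5)) 2, ← Real.rpow_mul hd0]; norm_num
  have hd : (a / b) ^ ((4:ℝ)/5) = a ^ ((4:ℝ)/5) / b ^ ((4:ℝ)/5) :=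
    Real.div_rpow ha.le hb.le _
  have ha' : (0:ℝ) < a ^ ((4:ℝ)/5) := Real.rpow_pos_of_pos ha _
  have hb' : (0:ℝ) < b ^ ((4:ℝ)/5) := Real.rpow_pos_of_pos hb _
  have hc : a ^ ((1:ℝ)/5) * a ^ ((4:ℝ)/5) = a := rpow_cancel a ha _ _ (by norm_num)
  rw [h1, hd]
  field_simp
  linear_combination -hc

private lemma e4 (a b : ℝ) (ha : 0 < a) (hb : 0 < b) :
    b * Real.sqrt ((a / b) ^ ((2:ℝ)/5)) = a ^ ((1:ℝ)/5) * b ^ ((4:ℝ)/5) := by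
  have hd0 : (0:ℝ) ≤ a / b := by positivity
  have h1 : Real.sqrt ((a / b) ^ ((2:ℝ)/5)) = (a / b) ^ ((1:ℝ)/5) := by
    rw [Real.sqrt_eq_rpow, ← Real.rpow_mul hd0]; norm_num
  have hd : (a / b) ^ ((1:ℝ)/5) = a ^ ((1:ℝ)/5) / b ^ ((1:ℝ)/5) :=
    Real.div_rpow ha.le hb.le _
  have hb' : (0:ℝ) < b ^ ((1:ℝ)/5) := Real.rpow_pos_of_pos hb _
  have hc : b ^ ((1:ℝ)/5) * b ^ ((4:ℝ)/5) = b := rpow_cancel b hb _ _ (by norm_num)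
  rw [h1, hd]
  field_simp
  linear_combination -hc

private lemma young135 (a b : ℝ) (ha : 0 < a) (hb : 0 < b) :
    a ^ ((1:ℝ)/3) * b ^ ((2:ℝ)/3) ≤ a + a ^ ((1:ℝ)/5) * b ^ ((4:ℝ)/5) := by
  have hp2 : (0:ℝ) ≤ a ^ ((1:ℝ)/5) * b ^ ((4:ℝ)/5) := by positivity
  have key := Real.geom_mean_le_arith_mean2_weighted (w₁ := 1/6) (w₂ := 5/6)
    (p₁ := a) (p₂ := a ^ ((1:ℝ)/5) * b ^ ((4:ℝ)/5))
    (by norm_num) (by norm_num) ha.le hp2 (by norm_num)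
  have heq : a ^ ((1:ℝ)/6) * (a ^ ((1:ℝ)/5) * b ^ ((4:ℝ)/5)) ^ ((5:ℝ)/6)
      = a ^ ((1:ℝ)/3) * b ^ ((2:ℝ)/3) := by
    rw [Real.mul_rpow (by positivity) (by positivity), ← Real.rpow_mul ha.le,
      ← Real.rpow_mul hb.le]
    norm_num
    rw [← mul_assoc, ← Real.rpow_add ha]
    norm_num
  calc a ^ ((1:ℝ)/3) * b ^ ((2:ℝ)/3)
      = a ^ ((1:ℝ)/6) * (a ^ ((1:ℝ)/5) * b ^ ((4:ℝ)/5)) ^ ((5:ℝ)/6) := heq.symm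
    _ ≤ (1/6) * a + (5/6) * (a ^ ((1:ℝ)/5) * b ^ ((4:ℝ)/5)) := by
        convert key using 2 <;> norm_num
    _ ≤ a + a ^ ((1:ℝ)/5) * b ^ ((4:ℝ)/5) := by nlinarith

set_option maxHeartbeats 2000000 in
/-- Embedding estimate via uniformly local Sobolev quantities: for
`ϑ > 0`, `k ∈ {1,2}` and the window `ρ(ζ) = 2/(2+ζ²)` there is `C > 0` such that for all
`z ∈ C^{k+1}_ub(ℝ)`:
`‖z‖_{C^k} ≤ C(‖z‖_∞ + ‖z‖_∞^{1/5} sup_y ‖ρ(ϑ(·+y)) ∂^{k+1}z‖_{L²}^{4/5})`. -/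
theorem uniformly_local_embedding
    (ϑ : ℝ) (hϑ : 0 < ϑ) (k : ℕ) (hk : k = 1 ∨ k = 2)
    (ρ : ℝ → ℝ) (hρ : ∀ ζ : ℝ, ρ ζ = 2 / (2 + ζ^2)) :
    ∃ C > 0, ∀ z : ℝ → ℝ,
      ContDiff ℝ (↑(k+1)) z →
      (∀ j ≤ k+1, ∃ M : ℝ, ∀ ζ, |iteratedDeriv j z ζ| ≤ M) →
      (∀ j ≤ k+1, UniformContinuous (iteratedDeriv j z)) →
      ∑ j ∈ Finset.range (k+1), ⨆ ζ : ℝ, |iteratedDeriv j z ζ|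
        ≤ C * ((⨆ ζ : ℝ, |z ζ|)
            + (⨆ ζ : ℝ, |z ζ|) ^ ((1:ℝ)/5) *
              (⨆ y : ℝ, Real.sqrt
                  (∫ ζ : ℝ, (ρ (ϑ * (ζ + y)) * iteratedDeriv (k+1) z ζ)^2)) ^ ((4:ℝ)/5)) := by
  refine ⟨300 * (1 + ϑ ^ 2), by positivity, ?_⟩
  intro z hz hbd _
  have hwc : Continuous (iteratedDeriv (k+1) z) := hz.continuous_iteratedDeriv (k+1) le_rfl
  obtain ⟨M, hM⟩ := hbd (k+1) le_rfl
  have hInt : ∀ y : ℝ,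
      Integrable (fun t : ℝ => (ρ (ϑ * (t + y)) * iteratedDeriv (k+1) z t) ^ 2) :=
    fun y => (rho_integrable ϑ hϑ ρ hρ _ hwc M hM y).1
  -- N
  have bdd0 : BddAbove (Set.range fun ζ : ℝ => |z ζ|) := by
    obtain ⟨M0, hM0⟩ := hbd 0 (Nat.zero_le _)
    exact ⟨M0, by rintro x ⟨ζ, rfl⟩; simpa [iteratedDeriv_zero] using hM0 ζ⟩
  set N := ⨆ ζ : ℝ, |z ζ| with hNdef
  have hNle : ∀ ζ, |z ζ| ≤ N := fun ζ => le_ciSup bdd0 ζ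
  have hN0 : 0 ≤ N := le_trans (abs_nonneg _) (hNle 0)
  -- S
  have bddS : BddAbove (Set.range fun y : ℝ =>
      Real.sqrt (∫ ζ : ℝ, (ρ (ϑ * (ζ + y)) * iteratedDeriv (k+1) z ζ) ^ 2)) := by
    refine ⟨Real.sqrt (∫ u : ℝ, 2 * M ^ 2 * (1 + (ϑ * (u + 0)) ^ 2)⁻¹), ?_⟩
    rintro x ⟨y, rfl⟩
    apply Real.sqrt_le_sqrt
    obtain ⟨hI, hb, hG⟩ := rho_integrable ϑ hϑ ρ hρ _ hwc M hM y
    obtain ⟨_, _, hG0⟩ := rho_integrable ϑ hϑ ρ hρ _ hwc M hM 0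
    have step : ∫ t : ℝ, (ρ (ϑ * (t + y)) * iteratedDeriv (k+1) z t) ^ 2
        ≤ ∫ t : ℝ, 2 * M ^ 2 * (1 + (ϑ * (t + y)) ^ 2)⁻¹ := integral_mono hI hG hb
    have tr : ∫ t : ℝ, 2 * M ^ 2 * (1 + (ϑ * (t + y)) ^ 2)⁻¹
        = ∫ u : ℝ, 2 * M ^ 2 * (1 + (ϑ * (u + 0)) ^ 2)⁻¹ := by
      have := integral_add_right_eq_self (μ := volume)
        (fun u : ℝ => 2 * M ^ 2 * (1 + (ϑ * (u + 0)) ^ 2)⁻¹) y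
      rw [← this]
      simp [add_assoc, add_comm, add_left_comm]
    rw [← tr]; exact step
  set S := ⨆ y : ℝ, Real.sqrt
      (∫ ζ : ℝ, (ρ (ϑ * (ζ + y)) * iteratedDeriv (k+1) z ζ) ^ 2) with hSdef
  have hS_ge : ∀ y : ℝ, Real.sqrt
      (∫ ζ : ℝ, (ρ (ϑ * (ζ + y)) * iteratedDeriv (k+1) z ζ) ^ 2) ≤ S :=
    fun y => le_ciSup bddS y
  have hS0 : 0 ≤ S := le_trans (Real.sqrt_nonneg _) (hS_ge 0)
  have hS2 : ∀ y : ℝ, ∫ t : ℝ, (ρ (ϑ * (t + y)) * iteratedDeriv (k+1) z t) ^ 2 ≤ S ^ 2 := by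
    intro y
    have h0 : 0 ≤ ∫ t : ℝ, (ρ (ϑ * (t + y)) * iteratedDeriv (k+1) z t) ^ 2 :=
      integral_nonneg fun t => sq_nonneg _
    calc ∫ t : ℝ, (ρ (ϑ * (t + y)) * iteratedDeriv (k+1) z t) ^ 2
        = (Real.sqrt (∫ t : ℝ, (ρ (ϑ * (t + y)) * iteratedDeriv (k+1) z t) ^ 2)) ^ 2 :=
          (Real.sq_sqrt h0).symm
      _ ≤ S ^ 2 := pow_le_pow_left₀ (Real.sqrt_nonneg _) (hS_ge y) 2
  clear_value N S
  -- derivatives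
  have hHas : ∀ j, j < k + 1 → ∀ t, HasDerivAt (iteratedDeriv j z) (iteratedDeriv (j+1) z t) t := by
    intro j hj t
    have hd : DifferentiableAt ℝ (iteratedDeriv j z) t :=
      (hz.differentiable_iteratedDeriv j (by exact_mod_cast hj)).differentiableAt
    rw [iteratedDeriv_succ]
    exact hd.hasDerivAt
  set K : ℝ := (2 + ϑ ^ 2) / 2 with hKdef
  have hKpos : 0 < K := by positivity
  have hK1 : 1 ≤ K := by rw [hKdef]; nlinarith [sq_nonneg ϑ]
  have hKle : K ≤ 1 + ϑ ^ 2 := by rw [hKdef]; nlinarith [sq_nonneg ϑ]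
  have sqInt : ∀ (ζ : ℝ) {h : ℝ}, 0 < h → h ≤ 1 →
      ∫ t in ζ..ζ + h, (iteratedDeriv (k+1) z t) ^ 2 ≤ K ^ 2 * S ^ 2 := by
    intro ζ h hh hh1
    exact sq_int_le ϑ ρ hρ _ hwc hInt S hS2 hh hh1 ζ
  clear_value K
  have intAbs : ∀ (ζ h lam : ℝ), 0 < h → h ≤ 1 → 0 < lam →
      ∫ t in ζ..ζ + h, |iteratedDeriv (k+1) z t|
        ≤ lam * h / 2 + 1 / (2 * lam) * (K ^ 2 * S ^ 2) := by
    intro ζ h lam hh hh1 hlam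
    calc ∫ t in ζ..ζ + h, |iteratedDeriv (k+1) z t|
        ≤ lam * h / 2 + (1 / (2 * lam)) * ∫ t in ζ..ζ + h, (iteratedDeriv (k+1) z t) ^ 2 :=
          abs_int_le _ hwc hh hlam ζ
      _ ≤ lam * h / 2 + 1 / (2 * lam) * (K ^ 2 * S ^ 2) := by
          have hs := sqInt ζ hh hh1
          have : (0:ℝ) ≤ 1 / (2 * lam) := by positivity
          nlinarith
  -- trivial case N = 0
  rcases eq_or_lt_of_le hN0 with hN_eq | hNpos
  · have hz0 : z = fun _ => (0:ℝ) := by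
      funext ζ
      have h1 : |z ζ| ≤ 0 := by rw [hN_eq]; exact hNle ζ
      exact abs_eq_zero.mp (le_antisymm h1 (abs_nonneg _))
    have hiter : ∀ j, iteratedDeriv j z = fun _ => (0:ℝ) := fun j => by
      rw [hz0]; exact iteratedDeriv_zero_fun j
    have LHS0 : ∑ j ∈ Finset.range (k+1), ⨆ ζ : ℝ, |iteratedDeriv j z ζ| = 0 :=
      Finset.sum_eq_zero fun j _ => by rw [hiter j]; simp
    rw [LHS0, ← hN_eq, Real.zero_rpow (by norm_num : ((1:ℝ)/5) ≠ 0)]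
    simp
  -- main case N > 0
  · rcases hk with hk1 | hk2
    · -- k = 1
      subst hk1
      set A1 := ⨆ ζ : ℝ, |iteratedDeriv 1 z ζ| with hA1def
      have master : ∀ h lam : ℝ, 0 < h → h ≤ 1 → 0 < lam →
          A1 ≤ 2 * N / h + (lam * h / 2 + 1 / (2 * lam) * (K ^ 2 * S ^ 2)) := by
        intro h lam hh hh1 hlam
        rw [hA1def]
        apply ciSup_le
        intro ζ
        have hg : ∀ t, HasDerivAt z (iteratedDeriv 1 z t) t := by
          intro t
          have := hHas 0 (by norm_num) t
          simpa [iteratedDeriv_zero] using this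
        have hg' : ∀ t, HasDerivAt (iteratedDeriv 1 z) (iteratedDeriv 2 z t) t :=
          hHas 1 (by norm_num)
        have kb := key_bound z (iteratedDeriv 1 z) (iteratedDeriv 2 z) hg hg'
          hwc N hNle hh ζ
        have ia := intAbs ζ h lam hh hh1 hlam
        calc |iteratedDeriv 1 z ζ| ≤ 2 * N / h + ∫ t in ζ..ζ + h, |iteratedDeriv 2 z t| := kb
          _ ≤ 2 * N / h + (lam * h / 2 + 1 / (2 * lam) * (K ^ 2 * S ^ 2)) := by linarith
      clear_value A1
      have hsum : ∑ j ∈ Finset.range 2, ⨆ ζ : ℝ, |iteratedDeriv j z ζ| = N + A1 := by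
        rw [Finset.sum_range_succ, Finset.sum_range_one]
        simp only [iteratedDeriv_zero]
        rw [← hNdef, ← hA1def]
      rw [hsum]
      have hT0 : 0 ≤ N ^ ((1:ℝ)/5) * S ^ ((4:ℝ)/5) := by positivity
      rcases eq_or_lt_of_le hS0 with hS_eq | hSpos
      · -- S = 0
        have hA1 : A1 ≤ 2 * N := by
          apply le_of_forall_pos_le_add
          intro ε hε
          have hm := master 1 (2 * ε) one_pos le_rfl (by positivity)
          have : 2 * N / 1 + (2 * ε * 1 / 2 + 1 / (2 * (2 * ε)) * (K ^ 2 * S ^ 2))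
              = 2 * N + ε := by rw [← hS_eq]; ring
          linarith
        nlinarith [sq_nonneg ϑ, mul_nonneg (mul_nonneg (by norm_num : (0:ℝ) ≤ 300)
          (sq_nonneg ϑ)) hN0, hT0]
      · -- S > 0
        set h : ℝ := min 1 ((N / S) ^ ((2:ℝ)/3)) with hhdef
        have hh0 : 0 < h :=
          lt_min one_pos (Real.rpow_pos_of_pos (div_pos hNpos hSpos) _)
        have hh1 : h ≤ 1 := min_le_left _ _
        have hsq : 0 < Real.sqrt h := Real.sqrt_pos.mpr hh0
        set lam : ℝ := K * S / Real.sqrt h with hlamdef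
        have hlam : 0 < lam := by positivity
        have hmul2 : Real.sqrt h ^ 2 = h := Real.sq_sqrt hh0.le
        have hsimp : lam * h / 2 + 1 / (2 * lam) * (K ^ 2 * S ^ 2)
            = K * S * Real.sqrt h := by
          have hne1 : Real.sqrt h ≠ 0 := ne_of_gt hsq
          have hne2 : K ≠ 0 := ne_of_gt hKpos
          have hne3 : S ≠ 0 := ne_of_gt hSpos
          rw [hlamdef]
          field_simp
          linear_combination -hmul2
        have hA1 : A1 ≤ 2 * N / h + K * S * Real.sqrt h := by
          have hm := master h lam hh0 hh1 hlam
          rw [hsimp] at hm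
          exact hm
        rcases le_total S N with hSN | hNS
        · -- h = 1
          have h_eq : h = 1 := min_eq_left (Real.one_le_rpow
            ((one_le_div hSpos).mpr hSN) (by norm_num))
          rw [h_eq, Real.sqrt_one] at hA1
          have hKS : K * S ≤ K * N := by nlinarith
          have hKN : K * N ≤ (1 + ϑ ^ 2) * N := mul_le_mul_of_nonneg_right hKle hN0
          nlinarith [sq_nonneg ϑ, hT0, hN0, mul_nonneg (sq_nonneg ϑ) hN0,
            mul_nonneg (sq_nonneg ϑ) hT0]
        · -- h = (N/S)^(2/3)
          have h_eq : h = (N / S) ^ ((2:ℝ)/3) := min_eq_right (Real.rpow_le_one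
            (by positivity) ((div_le_one hSpos).mpr hNS) (by norm_num))
          rw [h_eq] at hA1
          have e1' : 2 * N / ((N / S) ^ ((2:ℝ)/3))
              = 2 * (N ^ ((1:ℝ)/3) * S ^ ((2:ℝ)/3)) := by
            rw [mul_div_assoc, e1 N S hNpos hSpos]
          have e2' : K * S * Real.sqrt ((N / S) ^ ((2:ℝ)/3))
              = K * (N ^ ((1:ℝ)/3) * S ^ ((2:ℝ)/3)) := by
            rw [mul_assoc, e2 N S hNpos hSpos]
          rw [e1', e2'] at hA1
          have hy := young135 N S hNpos hSpos
          have hg0 : 0 ≤ N ^ ((1:ℝ)/3) * S ^ ((2:ℝ)/3) := by positivity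
          have f1 : K * (N ^ ((1:ℝ)/3) * S ^ ((2:ℝ)/3))
              ≤ (1 + ϑ ^ 2) * (N ^ ((1:ℝ)/3) * S ^ ((2:ℝ)/3)) :=
            mul_le_mul_of_nonneg_right hKle hg0
          have f2 : (3 + ϑ ^ 2) * (N ^ ((1:ℝ)/3) * S ^ ((2:ℝ)/3))
              ≤ (3 + ϑ ^ 2) * (N + N ^ ((1:ℝ)/5) * S ^ ((4:ℝ)/5)) :=
            mul_le_mul_of_nonneg_left hy (by positivity)
          nlinarith [sq_nonneg ϑ, hT0, hN0,
            mul_nonneg (sq_nonneg ϑ) (add_nonneg hN0 hT0), add_nonneg hN0 hT0]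
    · -- k = 2
      subst hk2
      set A1 := ⨆ ζ : ℝ, |iteratedDeriv 1 z ζ| with hA1def
      set A2 := ⨆ ζ : ℝ, |iteratedDeriv 2 z ζ| with hA2def
      have bdd1 : BddAbove (Set.range fun ζ : ℝ => |iteratedDeriv 1 z ζ|) := by
        obtain ⟨M1, hM1⟩ := hbd 1 (by norm_num)
        exact ⟨M1, by rintro x ⟨ζ, rfl⟩; exact hM1 ζ⟩
      have bdd2 : BddAbove (Set.range fun ζ : ℝ => |iteratedDeriv 2 z ζ|) := by
        obtain ⟨M2, hM2⟩ := hbd 2 (by norm_num)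
        exact ⟨M2, by rintro x ⟨ζ, rfl⟩; exact hM2 ζ⟩
      have hA1le : ∀ t, |iteratedDeriv 1 z t| ≤ A1 := fun t => le_ciSup bdd1 t
      have hA2le : ∀ t, |iteratedDeriv 2 z t| ≤ A2 := fun t => le_ciSup bdd2 t
      have hA20 : 0 ≤ A2 := le_trans (abs_nonneg _) (hA2le 0)
      have hA10 : 0 ≤ A1 := le_trans (abs_nonneg _) (hA1le 0)
      have hc2 : Continuous (iteratedDeriv 2 z) :=
        hz.continuous_iteratedDeriv 2 (by exact_mod_cast (by norm_num : (2:ℕ) ≤ 3))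
      have masterA1 : ∀ h : ℝ, 0 < h → A1 ≤ 2 * N / h + h * A2 := by
        intro h hh
        rw [hA1def]
        apply ciSup_le
        intro ζ
        have hg : ∀ t, HasDerivAt z (iteratedDeriv 1 z t) t := by
          intro t
          have := hHas 0 (by norm_num) t
          simpa [iteratedDeriv_zero] using this
        have hg' : ∀ t, HasDerivAt (iteratedDeriv 1 z) (iteratedDeriv 2 z t) t :=
          hHas 1 (by norm_num)
        have kb := key_bound z (iteratedDeriv 1 z) (iteratedDeriv 2 z) hg hg'
          hc2 N hNle hh ζ
        have hle : ζ ≤ ζ + h := by linarith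
        have istep : ∫ t in ζ..ζ + h, |iteratedDeriv 2 z t| ≤ h * A2 := by
          calc ∫ t in ζ..ζ + h, |iteratedDeriv 2 z t|
              ≤ ∫ _t in ζ..ζ + h, A2 := intervalIntegral.integral_mono_on hle
                (hc2.abs.intervalIntegrable _ _) intervalIntegrable_const
                (fun t _ => hA2le t)
            _ = h * A2 := by rw [intervalIntegral.integral_const]; simp [smul_eq_mul]
        linarith
      have master2 : ∀ h lam : ℝ, 0 < h → h ≤ 1 → 0 < lam →
          A2 ≤ 2 * A1 / h + (lam * h / 2 + 1 / (2 * lam) * (K ^ 2 * S ^ 2)) := by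
        intro h lam hh hh1 hlam
        rw [hA2def]
        apply ciSup_le
        intro ζ
        have hg' : ∀ t, HasDerivAt (iteratedDeriv 1 z) (iteratedDeriv 2 z t) t :=
          hHas 1 (by norm_num)
        have hg'' : ∀ t, HasDerivAt (iteratedDeriv 2 z) (iteratedDeriv 3 z t) t :=
          hHas 2 (by norm_num)
        have kb := key_bound (iteratedDeriv 1 z) (iteratedDeriv 2 z) (iteratedDeriv 3 z)
          hg' hg'' hwc A1 hA1le hh ζ
        have ia := intAbs ζ h lam hh hh1 hlam
        calc |iteratedDeriv 2 z ζ|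
            ≤ 2 * A1 / h + ∫ t in ζ..ζ + h, |iteratedDeriv 3 z t| := kb
          _ ≤ 2 * A1 / h + (lam * h / 2 + 1 / (2 * lam) * (K ^ 2 * S ^ 2)) := by linarith
      have combined : ∀ h lam : ℝ, 0 < h → h ≤ 1 → 0 < lam →
          A2 ≤ (4/3) * (32 * N / h ^ 2 + lam * h / 2 + 1 / (2 * lam) * (K ^ 2 * S ^ 2)) := by
        intro h lam hh hh1 hlam
        have m1 := masterA1 (h / 8) (by positivity)
        have m2 := master2 h lam hh hh1 hlam
        have e : 2 * N / (h / 8) = 16 * N / h := by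
          field_simp
          ring
        rw [e] at m1
        have step : 2 * A1 / h ≤ 2 * (16 * N / h + h / 8 * A2) / h := by gcongr
        have expand : 2 * (16 * N / h + h / 8 * A2) / h = 32 * N / h ^ 2 + A2 / 4 := by
          field_simp
          ring
        rw [expand] at step
        linarith
      clear_value A1 A2
      have hsum : ∑ j ∈ Finset.range 3, ⨆ ζ : ℝ, |iteratedDeriv j z ζ| = N + A1 + A2 := by
        rw [Finset.sum_range_succ, Finset.sum_range_succ, Finset.sum_range_one]
        simp only [iteratedDeriv_zero]
        rw [← hNdef, ← hA1def, ← hA2def]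
      rw [hsum]
      have hT0 : 0 ≤ N ^ ((1:ℝ)/5) * S ^ ((4:ℝ)/5) := by positivity
      have hA1top : A1 ≤ 2 * N + A2 := by
        have := masterA1 1 one_pos
        simpa using this
      rcases eq_or_lt_of_le hS0 with hS_eq | hSpos
      · -- S = 0
        have hA2 : A2 ≤ (4/3) * (32 * N) := by
          apply le_of_forall_pos_le_add
          intro ε hε
          have hm := combined 1 ((3/2) * ε) one_pos le_rfl (by positivity)
          have e : (4/3 : ℝ) * (32 * N / 1 ^ 2 + (3/2) * ε * 1 / 2
              + 1 / (2 * ((3/2) * ε)) * (K ^ 2 * S ^ 2)) = (4/3) * (32 * N) + ε := by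
            rw [← hS_eq]; ring
          linarith
        nlinarith [sq_nonneg ϑ, hT0, hN0, mul_nonneg (sq_nonneg ϑ) hN0,
          mul_nonneg (sq_nonneg ϑ) hT0, hA20]
      · -- S > 0
        set h : ℝ := min 1 ((N / S) ^ ((2:ℝ)/5)) with hhdef
        have hh0 : 0 < h :=
          lt_min one_pos (Real.rpow_pos_of_pos (div_pos hNpos hSpos) _)
        have hh1 : h ≤ 1 := min_le_left _ _
        have hsq : 0 < Real.sqrt h := Real.sqrt_pos.mpr hh0
        set lam : ℝ := K * S / Real.sqrt h with hlamdef
        have hlam : 0 < lam := by positivity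
        have hmul2 : Real.sqrt h ^ 2 = h := Real.sq_sqrt hh0.le
        have hsimp : lam * h / 2 + 1 / (2 * lam) * (K ^ 2 * S ^ 2)
            = K * S * Real.sqrt h := by
          have hne1 : Real.sqrt h ≠ 0 := ne_of_gt hsq
          have hne2 : K ≠ 0 := ne_of_gt hKpos
          have hne3 : S ≠ 0 := ne_of_gt hSpos
          rw [hlamdef]
          field_simp
          linear_combination -hmul2
        have hA2 : A2 ≤ (4/3) * (32 * N / h ^ 2 + K * S * Real.sqrt h) := by
          have hm := combined h lam hh0 hh1 hlam
          have e : (4/3 : ℝ) * (32 * N / h ^ 2 + lam * h / 2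
              + 1 / (2 * lam) * (K ^ 2 * S ^ 2))
              = (4/3) * (32 * N / h ^ 2 + (lam * h / 2 + 1 / (2 * lam) * (K ^ 2 * S ^ 2))) := by
            ring
          rw [e, hsimp] at hm
          exact hm
        rcases le_total S N with hSN | hNS
        · -- h = 1
          have h_eq : h = 1 := min_eq_left (Real.one_le_rpow
            ((one_le_div hSpos).mpr hSN) (by norm_num))
          rw [h_eq, Real.sqrt_one] at hA2
          have hKS : K * S ≤ K * N := by nlinarith
          have hKN : K * N ≤ (1 + ϑ ^ 2) * N := mul_le_mul_of_nonneg_right hKle hN0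
          nlinarith [sq_nonneg ϑ, hT0, hN0, mul_nonneg (sq_nonneg ϑ) hN0,
            mul_nonneg (sq_nonneg ϑ) hT0, hA20]
        · -- h = (N/S)^(2/5)
          have h_eq : h = (N / S) ^ ((2:ℝ)/5) := min_eq_right (Real.rpow_le_one
            (by positivity) ((div_le_one hSpos).mpr hNS) (by norm_num))
          rw [h_eq] at hA2
          have e3' : 32 * N / ((N / S) ^ ((2:ℝ)/5)) ^ 2
              = 32 * (N ^ ((1:ℝ)/5) * S ^ ((4:ℝ)/5)) := by
            rw [mul_div_assoc, e3 N S hNpos hSpos]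
          have e4' : K * S * Real.sqrt ((N / S) ^ ((2:ℝ)/5))
              = K * (N ^ ((1:ℝ)/5) * S ^ ((4:ℝ)/5)) := by
            rw [mul_assoc, e4 N S hNpos hSpos]
          rw [e3', e4'] at hA2
          have f1 : K * (N ^ ((1:ℝ)/5) * S ^ ((4:ℝ)/5))
              ≤ (1 + ϑ ^ 2) * (N ^ ((1:ℝ)/5) * S ^ ((4:ℝ)/5)) :=
            mul_le_mul_of_nonneg_right hKle hT0
          nlinarith [sq_nonneg ϑ, hT0, hN0, mul_nonneg (sq_nonneg ϑ) hN0,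
            mul_nonneg (sq_nonneg ϑ) hT0, hA20]
end

section
/- Let α > 0. There exists C > 0 such that for all t ≥ 0: ∫₀ᵗ (1/(1+t-s) + e^{-α(t-s)}) · (1/(1+s)) ds ≤ C · log(2+t)/(1+t). -/
/-- The convolution estimate
`∫₀ᵗ ((1+t-s)⁻¹ + e^{-α(t-s)})(1+s)⁻¹ ds ≤ C log(2+t)/(1+t)`. -/
theorem convolution_estimate_log (α : ℝ) (hα : 0 < α) :
    ∃ C > 0, ∀ t : ℝ, 0 ≤ t →
      (∫ s in (0:ℝ)..t, (1 / (1 + t - s) + Real.exp (-α * (t - s))) * (1 / (1 + s)))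
        ≤ C * Real.log (2 + t) / (1 + t) := by
  set K := max 1 (1/α) with hK
  have hK1 : (1:ℝ) ≤ K := le_max_left _ _
  have hKα : (1:ℝ) ≤ K * α := by
    rcases le_total 1 α with h | h
    · nlinarith
    · have h2 : 1/α ≤ K := le_max_right _ _
      have : (1/α) * α = 1 := by field_simp
      nlinarith
  refine ⟨2 * (1 + K), by positivity, fun t ht => ?_⟩
  have hexp : ∀ x : ℝ, 0 ≤ x → Real.exp (-α * x) ≤ K / (1 + x) := by
    intro x hx
    have h1 : 1 + α * x ≤ Real.exp (α * x) := by
      have := Real.add_one_le_exp (α * x); linarith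
    have hpos : (0:ℝ) < 1 + α * x := by positivity
    have hxpos : (0:ℝ) < 1 + x := by positivity
    have h2 : Real.exp (-α * x) ≤ (1 + α * x)⁻¹ := by
      rw [neg_mul, Real.exp_neg]
      exact inv_anti₀ hpos h1
    refine h2.trans ?_
    rw [inv_eq_one_div, div_le_div_iff₀ hpos hxpos]
    nlinarith
  -- pointwise bound
  have hmain : ∀ s ∈ Set.uIcc (0:ℝ) t,
      (1 / (1 + t - s) + Real.exp (-α * (t - s))) * (1 / (1 + s))
        ≤ (1 + K) / (2 + t) * (1 / (1 + t - s) + 1 / (1 + s)) := by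
    intro s hs
    rw [Set.uIcc_of_le ht] at hs
    obtain ⟨hs0, hst⟩ := hs
    have hA : (0:ℝ) < 1 + t - s := by linarith
    have hB : (0:ℝ) < 1 + s := by linarith
    have he : Real.exp (-α * (t - s)) ≤ K / (1 + t - s) := by
      have := hexp (t - s) (by linarith)
      have : Real.exp (-α * (t - s)) ≤ K / (1 + (t - s)) := this
      calc Real.exp (-α * (t - s)) ≤ K / (1 + (t - s)) := this
        _ = K / (1 + t - s) := by ring_nf
    have step1 : (1 / (1 + t - s) + Real.exp (-α * (t - s))) * (1 / (1 + s))
        ≤ ((1 + K) / (1 + t - s)) * (1 / (1 + s)) := by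
      have : 1 / (1 + t - s) + Real.exp (-α * (t - s)) ≤ (1 + K) / (1 + t - s) := by
        have : 1 / (1 + t - s) + K / (1 + t - s) = (1 + K) / (1 + t - s) := by ring
        linarith [he]
      have hb : (0:ℝ) ≤ 1 / (1 + s) := by positivity
      exact mul_le_mul_of_nonneg_right this hb
    refine step1.trans_eq ?_
    have h2t : (2 + t) ≠ 0 := by positivity
    field_simp
    ring
  -- integrability
  have hcont1 : ContinuousOn (fun s : ℝ =>
      (1 / (1 + t - s) + Real.exp (-α * (t - s))) * (1 / (1 + s))) (Set.uIcc 0 t) := by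
    apply ContinuousOn.mul
    · apply ContinuousOn.add
      · apply ContinuousOn.div continuousOn_const (by fun_prop)
        intro s hs
        rw [Set.uIcc_of_le ht] at hs
        have : (0:ℝ) < 1 + t - s := by cases hs; linarith
        linarith
      · fun_prop
    · apply ContinuousOn.div continuousOn_const (by fun_prop)
      intro s hs
      rw [Set.uIcc_of_le ht] at hs
      have : (0:ℝ) < 1 + s := by cases hs; linarith
      linarith
  have hcont2 : ContinuousOn (fun s : ℝ =>
      (1 + K) / (2 + t) * (1 / (1 + t - s) + 1 / (1 + s))) (Set.uIcc 0 t) := by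
    apply ContinuousOn.mul continuousOn_const
    apply ContinuousOn.add
    · apply ContinuousOn.div continuousOn_const (by fun_prop)
      intro s hs
      rw [Set.uIcc_of_le ht] at hs
      have : (0:ℝ) < 1 + t - s := by cases hs; linarith
      linarith
    · apply ContinuousOn.div continuousOn_const (by fun_prop)
      intro s hs
      rw [Set.uIcc_of_le ht] at hs
      have : (0:ℝ) < 1 + s := by cases hs; linarith
      linarith
  have hint1 := hcont1.intervalIntegrable (μ := MeasureTheory.volume)
  have hint2 := hcont2.intervalIntegrable (μ := MeasureTheory.volume)
  have hmono := intervalIntegral.integral_mono_on ht hint1 hint2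
    (fun s hs => hmain s (by rw [Set.uIcc_of_le ht]; exact hs))
  -- compute the RHS integral
  have hI2 : (∫ s in (0:ℝ)..t, 1 / (1 + s)) = Real.log (1 + t) := by
    have h : (∫ s in (0:ℝ)..t, 1 / (1 + s)) = ∫ x in (1+(0:ℝ))..(1+t), 1 / x :=
      intervalIntegral.integral_comp_add_left (fun u : ℝ => 1 / u) 1
    simp only [add_zero] at h
    rw [h, integral_one_div, div_one]
    intro hmem
    rw [Set.uIcc_of_le (by linarith : (1:ℝ) ≤ 1 + t)] at hmem
    have := hmem.1; linarith
  have hI1 : (∫ s in (0:ℝ)..t, 1 / (1 + t - s)) = Real.log (1 + t) := by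
    have h : (∫ s in (0:ℝ)..t, 1 / (1 + t - s)) = ∫ x in (1+t-t)..(1+t-0), 1 / x :=
      intervalIntegral.integral_comp_sub_left (fun u : ℝ => 1 / u) (1 + t)
    simp only [sub_zero, add_sub_cancel_right] at h
    rw [h, integral_one_div, div_one]
    intro hmem
    rw [Set.uIcc_of_le (by linarith : (1:ℝ) ≤ 1 + t)] at hmem
    have := hmem.1; linarith
  have hIsum : (∫ s in (0:ℝ)..t, (1 + K) / (2 + t) * (1 / (1 + t - s) + 1 / (1 + s)))
      = (1 + K) / (2 + t) * (2 * Real.log (1 + t)) := by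
    rw [intervalIntegral.integral_const_mul]
    have hadd : (∫ s in (0:ℝ)..t, (1 / (1 + t - s) + 1 / (1 + s)))
        = (∫ s in (0:ℝ)..t, 1 / (1 + t - s)) + ∫ s in (0:ℝ)..t, 1 / (1 + s) := by
      apply intervalIntegral.integral_add
      · apply ContinuousOn.intervalIntegrable
        apply ContinuousOn.div continuousOn_const (by fun_prop)
        intro s hs
        rw [Set.uIcc_of_le ht] at hs
        have : (0:ℝ) < 1 + t - s := by cases hs; linarith
        linarith
      · apply ContinuousOn.intervalIntegrable
        apply ContinuousOn.div continuousOn_const (by fun_prop)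
        intro s hs
        rw [Set.uIcc_of_le ht] at hs
        have : (0:ℝ) < 1 + s := by cases hs; linarith
        linarith
    rw [hadd, hI1, hI2]; ring
  rw [hIsum] at hmono
  refine hmono.trans ?_
  have hlog1 : (0:ℝ) ≤ Real.log (1 + t) := Real.log_nonneg (by linarith)
  have hlog2 : Real.log (1 + t) ≤ Real.log (2 + t) :=
    Real.log_le_log (by linarith) (by linarith)
  have h1t : (0:ℝ) < 1 + t := by linarith
  have h2t : (0:ℝ) < 2 + t := by linarith
  rw [div_mul_eq_mul_div, mul_comm, div_le_div_iff₀ h2t h1t] at *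
  · have hM : (0:ℝ) ≤ Real.log (2 + t) := hlog1.trans hlog2
    have e1 : 2 * (1 + K) * (1 + t) * Real.log (1 + t) ≤ 2 * (1 + K) * (1 + t) * Real.log (2 + t) :=
      mul_le_mul_of_nonneg_left hlog2 (by positivity)
    have e2 : 2 * (1 + K) * (1 + t) * Real.log (2 + t) ≤ 2 * (1 + K) * (2 + t) * Real.log (2 + t) := by
      have : 2 * (1 + K) * (1 + t) ≤ 2 * (1 + K) * (2 + t) := by nlinarith
      exact mul_le_mul_of_nonneg_right this hM
    nlinarith
end

section
/- There exists C > 0 such that for all t ≥ 0: ∫₀ᵗ (t-s)^{-1/2} (1+s)^{-1} ds ≤ C · log(2+t)/(1+t)^{1/2}, where the integral is interpreted as an improper integral convergent at s = t. -/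
open intervalIntegral Real MeasureTheory

lemma int_inv_aux (u : ℝ) (hu : 0 ≤ u) :
    ∫ s in (0:ℝ)..u, (1 + s)⁻¹ = Real.log (1 + u) := by
  have h := intervalIntegral.integral_comp_add_left (a := (0:ℝ)) (b := u)
    (fun x => x⁻¹) 1
  simp only [add_zero] at h
  rw [h, integral_inv]
  · rw [div_one]
  · intro hc
    rw [Set.mem_uIcc] at hc
    rcases hc with ⟨h1, _⟩ | ⟨_, h2⟩ <;> linarith

lemma int_rpow_aux (t a : ℝ) (ha : a ≤ t) :
    ∫ s in a..t, (t - s) ^ (-(1:ℝ)/2) = 2 * (t - a) ^ ((1:ℝ)/2) := by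
  have h := intervalIntegral.integral_comp_sub_left (a := a) (b := t)
    (fun x => x ^ (-(1:ℝ)/2)) t
  simp only [sub_self] at h
  rw [h, integral_rpow (Or.inl (by norm_num))]
  rw [Real.zero_rpow (by norm_num)]
  norm_num
  ring

lemma integrable_aux (t a b : ℝ) (ha : 0 ≤ a) (hb : 0 ≤ b) :
    IntervalIntegrable (fun s => (t - s) ^ (-(1:ℝ)/2) * (1 + s)⁻¹) volume a b := by
  apply IntervalIntegrable.mul_continuousOn
  · have := (intervalIntegral.intervalIntegrable_rpow' (a := t - a) (b := t - b)
      (r := -(1:ℝ)/2) (by norm_num)).comp_sub_left t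
    simpa using this
  · apply ContinuousOn.inv₀
    · fun_prop
    · intro x hx
      rw [Set.mem_uIcc] at hx
      rcases hx with ⟨h1, _⟩ | ⟨h1, _⟩ <;> nlinarith

lemma integrable_rpow_part (t a b : ℝ) :
    IntervalIntegrable (fun s => (t - s) ^ (-(1:ℝ)/2)) volume a b := by
  have := (intervalIntegral.intervalIntegrable_rpow' (a := t - a) (b := t - b)
    (r := -(1:ℝ)/2) (by norm_num)).comp_sub_left t
  simpa using this

set_option maxHeartbeats 1000000 in
/-- The convolution estimate
`∫₀ᵗ (t-s)^{-1/2}(1+s)⁻¹ ds ≤ C log(2+t)/(1+t)^{1/2}` (improper at `s = t`; here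
`(t-s)^{-1/2}` is the real power, vanishing at `s = t`). -/
theorem convolution_estimate_sqrt :
    ∃ C > 0, ∀ t : ℝ, 0 ≤ t →
      (∫ s in (0:ℝ)..t, (t - s) ^ (-(1:ℝ)/2) * (1 + s)⁻¹)
        ≤ C * Real.log (2 + t) / (1 + t) ^ ((1:ℝ)/2) := by
  refine ⟨16, by norm_num, fun t ht => ?_⟩
  have hL2 : Real.log 2 ≤ Real.log (2 + t) := Real.log_le_log (by norm_num) (by linarith)
  have hlog2 : (0.6931471803 : ℝ) < Real.log 2 := Real.log_two_gt_d9
  have hrw : (1 + t) ^ ((1:ℝ)/2) = Real.sqrt (1 + t) := (Real.sqrt_eq_rpow _).symm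
  have hapos : 0 < Real.sqrt (1 + t) := Real.sqrt_pos.mpr (by linarith)
  have ha2 : Real.sqrt (1 + t) ^ 2 = 1 + t := Real.sq_sqrt (by linarith)
  rw [hrw]
  rcases le_or_gt t 1 with h1 | h1
  · -- small t
    have hmono : (∫ s in (0:ℝ)..t, (t - s) ^ (-(1:ℝ)/2) * (1 + s)⁻¹)
        ≤ ∫ s in (0:ℝ)..t, (t - s) ^ (-(1:ℝ)/2) := by
      apply intervalIntegral.integral_mono_on ht (integrable_aux t 0 t le_rfl ht)
        (integrable_rpow_part t 0 t)
      intro s hs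
      have h1s : (1:ℝ) ≤ 1 + s := by linarith [hs.1]
      have := Real.rpow_nonneg (x := t - s) (by linarith [hs.2]) (-(1:ℝ)/2)
      calc (t - s) ^ (-(1:ℝ)/2) * (1 + s)⁻¹ ≤ (t - s) ^ (-(1:ℝ)/2) * 1 := by
              apply mul_le_mul_of_nonneg_left _ this
              exact inv_le_one_of_one_le₀ h1s
        _ = (t - s) ^ (-(1:ℝ)/2) := mul_one _
    rw [int_rpow_aux t 0 ht, sub_zero] at hmono
    have htrw : t ^ ((1:ℝ)/2) = Real.sqrt t := (Real.sqrt_eq_rpow _).symm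
    rw [htrw] at hmono
    have hst : Real.sqrt t ≤ 1 := by
      rw [show (1:ℝ) = Real.sqrt 1 by simp]
      exact Real.sqrt_le_sqrt h1
    have hsa : Real.sqrt (1 + t) < 1.5 := by
      rw [show (1.5:ℝ) = Real.sqrt (1.5^2) by rw [Real.sqrt_sq]; norm_num]
      exact Real.sqrt_lt_sqrt (by linarith) (by nlinarith)
    rw [le_div_iff₀ hapos]
    nlinarith [Real.sqrt_nonneg t, Real.sqrt_nonneg (1+t)]
  · -- large t
    have hhalf : (0:ℝ) ≤ t/2 := by linarith
    have hsplit := intervalIntegral.integral_add_adjacent_intervals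
      (integrable_aux t 0 (t/2) le_rfl hhalf) (integrable_aux t (t/2) t hhalf ht)
    rw [← hsplit]
    set b := Real.sqrt (t/2) with hbdef
    have hbpos : 0 < b := Real.sqrt_pos.mpr (by linarith)
    have hb2 : b ^ 2 = t/2 := Real.sq_sqrt hhalf
    set a := Real.sqrt (1 + t) with hadef
    -- bound first piece
    have hI1 : (∫ s in (0:ℝ)..t/2, (t - s) ^ (-(1:ℝ)/2) * (1 + s)⁻¹)
        ≤ (t/2) ^ (-(1:ℝ)/2) * Real.log (1 + t/2) := by
      have hmono : (∫ s in (0:ℝ)..t/2, (t - s) ^ (-(1:ℝ)/2) * (1 + s)⁻¹)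
          ≤ ∫ s in (0:ℝ)..t/2, (t/2) ^ (-(1:ℝ)/2) * (1 + s)⁻¹ := by
        apply intervalIntegral.integral_mono_on hhalf (integrable_aux t 0 (t/2) le_rfl hhalf)
        · apply ContinuousOn.intervalIntegrable
          apply ContinuousOn.mul continuousOn_const
          apply ContinuousOn.inv₀
          · fun_prop
          · intro x hx
            rw [Set.uIcc_of_le hhalf] at hx
            have := hx.1; nlinarith
        · intro s hs
          apply mul_le_mul_of_nonneg_right _ (inv_nonneg.mpr (by linarith [hs.1]))
          exact Real.rpow_le_rpow_of_nonpos (by linarith) (by linarith [hs.2]) (by norm_num)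
      rw [intervalIntegral.integral_const_mul, int_inv_aux _ hhalf] at hmono
      exact hmono
    -- bound second piece
    have hI2 : (∫ s in (t/2)..t, (t - s) ^ (-(1:ℝ)/2) * (1 + s)⁻¹)
        ≤ 2 * b * (1 + t/2)⁻¹ := by
      have hmono : (∫ s in (t/2)..t, (t - s) ^ (-(1:ℝ)/2) * (1 + s)⁻¹)
          ≤ ∫ s in (t/2)..t, (t - s) ^ (-(1:ℝ)/2) * (1 + t/2)⁻¹ := by
        apply intervalIntegral.integral_mono_on (by linarith)
          (integrable_aux t (t/2) t hhalf ht)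
          ((integrable_rpow_part t (t/2) t).mul_const _)
        intro s hs
        apply mul_le_mul_of_nonneg_left _ (Real.rpow_nonneg (by linarith [hs.2]) _)
        apply inv_anti₀ (by linarith) (by linarith [hs.1])
      rw [intervalIntegral.integral_mul_const, int_rpow_aux t (t/2) (by linarith)] at hmono
      have : t - t/2 = t/2 := by ring
      rw [this] at hmono
      rw [show (t/2) ^ ((1:ℝ)/2) = b from (Real.sqrt_eq_rpow _).symm] at hmono
      exact hmono
    -- convert rpow to sqrt in hI1
    have hbinv : (t/2) ^ (-(1:ℝ)/2) = b⁻¹ := by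
      rw [show -(1:ℝ)/2 = -(1/2) by ring, Real.rpow_neg (by linarith),
        ← Real.sqrt_eq_rpow]
    rw [hbinv] at hI1
    -- numeric facts
    have hLa : Real.log (1 + t/2) ≤ Real.log (2 + t) :=
      Real.log_le_log (by linarith) (by linarith)
    have hLnn : 0 ≤ Real.log (1 + t/2) := Real.log_nonneg (by linarith)
    have hab : a ≤ 2 * b := by
      have h4 : Real.sqrt (2*t) = 2 * b := by
        rw [hbdef, show (2:ℝ)*t = 2^2 * (t/2) by ring, Real.sqrt_mul (by positivity),
          Real.sqrt_sq (by norm_num)]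
      rw [hadef, ← h4]
      exact Real.sqrt_le_sqrt (by linarith)
    have hX : b⁻¹ * Real.log (1 + t/2) ≤ 2 * Real.log (2 + t) / a := by
      have hba : b⁻¹ ≤ 2 / a := by
        rw [inv_eq_one_div, div_le_div_iff₀ hbpos hapos]
        linarith
      calc b⁻¹ * Real.log (1 + t/2) ≤ (2 / a) * Real.log (2 + t) :=
            mul_le_mul hba hLa hLnn (by positivity)
        _ = 2 * Real.log (2 + t) / a := by ring
    have hY : 2 * b * (1 + t/2)⁻¹ ≤ 14 * Real.log (2 + t) / a := by
      rw [show 2 * b * (1 + t/2)⁻¹ = (2*b) / (1 + t/2) by ring,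
        div_le_div_iff₀ (by linarith) hapos]
      have hLmul : (0.6931471803:ℝ) * (1 + t/2) ≤ Real.log (2 + t) * (1 + t/2) := by
        nlinarith
      nlinarith [sq_nonneg (a - b), ha2, hb2]
    calc (∫ s in (0:ℝ)..t/2, (t - s) ^ (-(1:ℝ)/2) * (1 + s)⁻¹)
          + ∫ s in (t/2)..t, (t - s) ^ (-(1:ℝ)/2) * (1 + s)⁻¹
        ≤ b⁻¹ * Real.log (1 + t/2) + 2 * b * (1 + t/2)⁻¹ := add_le_add hI1 hI2
      _ ≤ 2 * Real.log (2 + t) / a + 14 * Real.log (2 + t) / a := add_le_add hX hY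
      _ = 16 * Real.log (2 + t) / a := by ring
end
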